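/- Let 0 < d < 1/2. There exists a constant C (depending only on d) such that for every integer L ≥ 1, Σ_{i,j ≥ 1, |i−j| > L} i^{2d−2} j^{2d−2} ≤ C L^{2d−1}. -/

import Mathlib

open scoped ENNReal

private lemma offdiag_tail_bound (a : ℝ) (ha0 : a ≤ 0) (M : ℕ) (hM : 1 ≤ M) :
    (∑' j : ℕ, if M < j then ENNReal.ofReal ((j : ℝ) ^ a) else 0)
      ≤ (∑' k : ℕ, ENNReal.ofReal ((k : ℝ) ^ a)) * ENNReal.ofReal ((M : ℝ) ^ (a + 1)) := by
  haveI : NeZero M := ⟨by omega⟩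
  set H : ℕ → ℝ≥0∞ := fun j => if M < j then ENNReal.ofReal ((j : ℝ) ^ a) else 0 with hH
  have h1 : (∑' j : ℕ, H j) = ∑' p : ℕ × Fin M, H ((Nat.divModEquiv M).symm p) :=
    (Equiv.tsum_eq (Nat.divModEquiv M).symm H).symm
  rw [h1, ENNReal.tsum_prod']
  have h2 : ∀ k : ℕ, (∑' r : Fin M, H ((Nat.divModEquiv M).symm (k, r)))
      ≤ (M : ℝ≥0∞) * (if 1 ≤ k then ENNReal.ofReal (((k * M : ℕ) : ℝ) ^ a) else 0) := by
    intro k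
    rw [tsum_fintype]
    have hb : ∀ r : Fin M, H ((Nat.divModEquiv M).symm (k, r))
        ≤ (if 1 ≤ k then ENNReal.ofReal (((k * M : ℕ) : ℝ) ^ a) else 0) := by
      intro r
      simp only [Nat.divModEquiv, Equiv.coe_fn_symm_mk, hH]
      rcases Nat.eq_zero_or_pos k with hk | hk
      · subst hk
        have : ¬ (M < 0 * M + (r : ℕ)) := by have := r.is_lt; omega
        simp [this]
      · rw [if_pos (show 1 ≤ k from hk)]
        split
        · apply ENNReal.ofReal_le_ofReal
          apply Real.rpow_le_rpow_of_nonpos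
          · have : 1 ≤ k * M := Nat.one_le_iff_ne_zero.2 (by positivity)
            exact_mod_cast Nat.lt_of_lt_of_le Nat.zero_lt_one this
          · exact_mod_cast Nat.le_add_right (k * M) r
          · exact ha0
        · exact zero_le
    calc (∑ r : Fin M, H ((Nat.divModEquiv M).symm (k, r)))
        ≤ ∑ _r : Fin M, (if 1 ≤ k then ENNReal.ofReal (((k * M : ℕ) : ℝ) ^ a) else 0) :=
          Finset.sum_le_sum fun r _ => hb r
      _ = (M : ℝ≥0∞) * (if 1 ≤ k then ENNReal.ofReal (((k * M : ℕ) : ℝ) ^ a) else 0) := by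
          simp [Finset.sum_const, nsmul_eq_mul]
  refine le_trans (ENNReal.tsum_le_tsum h2) ?_
  have h3 : ∀ k : ℕ, (M : ℝ≥0∞) * (if 1 ≤ k then ENNReal.ofReal (((k * M : ℕ) : ℝ) ^ a) else 0)
      ≤ ENNReal.ofReal ((k : ℝ) ^ a) * ((M : ℝ≥0∞) * ENNReal.ofReal ((M : ℝ) ^ a)) := by
    intro k
    split
    · have hkM : ((k * M : ℕ) : ℝ) = (k : ℝ) * (M : ℝ) := by push_cast; ring
      rw [hkM, Real.mul_rpow (by positivity) (by positivity), ENNReal.ofReal_mul (by positivity)]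
      ring_nf
      exact le_refl _
    · simp
  refine le_trans (ENNReal.tsum_le_tsum h3) ?_
  rw [ENNReal.tsum_mul_right]
  have h4 : (M : ℝ≥0∞) * ENNReal.ofReal ((M : ℝ) ^ a) = ENNReal.ofReal ((M : ℝ) ^ (a + 1)) := by
    have hMpos : (0 : ℝ) < M := by exact_mod_cast hM
    rw [← ENNReal.ofReal_natCast, ← ENNReal.ofReal_mul (by positivity)]
    congr 1
    rw [Real.rpow_add hMpos, Real.rpow_one]
    ring
  rw [h4]

/-- **Off-diagonal tail estimate**: for `0 < d < 1/2` there is `C > 0` such that for every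
integer `L ≥ 1`, `∑_{i,j≥1, |i−j|>L} i^{2d−2} j^{2d−2} ≤ C L^{2d−1}`. -/
theorem offdiagonal_double_tail (d : ℝ) (hd0 : 0 < d) (hd1 : d < 1 / 2) :
    ∃ C : ℝ, 0 < C ∧ ∀ L : ℕ, 1 ≤ L →
      (∑' q : ℕ × ℕ,
        if 1 ≤ q.1 ∧ 1 ≤ q.2 ∧ (L : ℤ) < |(q.1 : ℤ) - (q.2 : ℤ)| then
          (q.1 : ℝ) ^ (2 * d - 2) * (q.2 : ℝ) ^ (2 * d - 2)
        else 0) ≤ C * (L : ℝ) ^ (2 * d - 1) := by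
  set a : ℝ := 2 * d - 2 with ha_def
  have ha : a < -1 := by rw [ha_def]; linarith
  have ha0 : a ≤ 0 := by linarith
  have hs0 : a + 1 ≤ 0 := by linarith
  have hsum : Summable (fun n : ℕ => (n : ℝ) ^ a) := Real.summable_nat_rpow.2 ha
  set R : ℝ := ∑' n : ℕ, (n : ℝ) ^ a with hR_def
  have hR : 0 ≤ R := tsum_nonneg fun n => Real.rpow_nonneg (Nat.cast_nonneg n) a
  have hE : (∑' n : ℕ, ENNReal.ofReal ((n : ℝ) ^ a)) = ENNReal.ofReal R :=
    (ENNReal.ofReal_tsum_of_nonneg (fun n => Real.rpow_nonneg (Nat.cast_nonneg n) a) hsum).symm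
  refine ⟨2 * R ^ 2 + 1, by positivity, fun L hL => ?_⟩
  have hLpos : (0 : ℝ) < L := by exact_mod_cast hL
  have hs_eq : 2 * d - 1 = a + 1 := by rw [ha_def]; ring
  set F : ℕ × ℕ → ℝ := fun q =>
    if 1 ≤ q.1 ∧ 1 ≤ q.2 ∧ (L : ℤ) < |(q.1 : ℤ) - (q.2 : ℤ)| then
      (q.1 : ℝ) ^ a * (q.2 : ℝ) ^ a else 0 with hF_def
  have hFnonneg : ∀ q, 0 ≤ F q := by
    intro q
    rw [hF_def]
    dsimp only
    split
    · exact mul_nonneg (Real.rpow_nonneg (Nat.cast_nonneg _) _)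
        (Real.rpow_nonneg (Nat.cast_nonneg _) _)
    · exact le_refl _
  show (∑' q, F q) ≤ (2 * R ^ 2 + 1) * (L : ℝ) ^ (2 * d - 1)
  by_cases hS : Summable F
  swap
  · rw [tsum_eq_zero_of_not_summable hS]; positivity
  -- ENNReal side
  set G₁ : ℕ × ℕ → ℝ≥0∞ := fun q =>
    if q.1 + L < q.2 then ENNReal.ofReal ((q.1 : ℝ) ^ a) * ENNReal.ofReal ((q.2 : ℝ) ^ a) else 0
    with hG₁
  set G₂ : ℕ × ℕ → ℝ≥0∞ := fun q =>
    if q.2 + L < q.1 then ENNReal.ofReal ((q.1 : ℝ) ^ a) * ENNReal.ofReal ((q.2 : ℝ) ^ a) else 0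
    with hG₂
  have step1 : (∑' q, ENNReal.ofReal (F q)) ≤ (∑' q, (G₁ q + G₂ q)) := by
    apply ENNReal.tsum_le_tsum
    intro q
    rw [hF_def]
    dsimp only
    split
    · rename_i hcond
      obtain ⟨hi, hj, habs⟩ := hcond
      rw [ENNReal.ofReal_mul (Real.rpow_nonneg (Nat.cast_nonneg _) _)]
      have hcases : q.1 + L < q.2 ∨ q.2 + L < q.1 := by
        rcases abs_cases ((q.1 : ℤ) - (q.2 : ℤ)) with ⟨h, _⟩ | ⟨h, _⟩ <;> rw [h] at habs <;> omega
      rcases hcases with h | h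
      · rw [hG₁]
        calc ENNReal.ofReal ((q.1 : ℝ) ^ a) * ENNReal.ofReal ((q.2 : ℝ) ^ a)
            = (if q.1 + L < q.2 then ENNReal.ofReal ((q.1 : ℝ) ^ a) *
                ENNReal.ofReal ((q.2 : ℝ) ^ a) else 0) := by rw [if_pos h]
          _ ≤ _ := le_add_right (le_refl _)
      · rw [hG₂]
        calc ENNReal.ofReal ((q.1 : ℝ) ^ a) * ENNReal.ofReal ((q.2 : ℝ) ^ a)
            = (if q.2 + L < q.1 then ENNReal.ofReal ((q.1 : ℝ) ^ a) *
                ENNReal.ofReal ((q.2 : ℝ) ^ a) else 0) := by rw [if_pos h]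
          _ ≤ _ := le_add_left (le_refl _)
    · simp
  have step3 : (∑' q, G₂ q) = ∑' q, G₁ q := by
    rw [← Equiv.tsum_eq (Equiv.prodComm ℕ ℕ) G₂]
    apply tsum_congr
    intro q
    rw [hG₁, hG₂]
    simp only [Equiv.prodComm_apply, Prod.snd_swap, Prod.fst_swap]
    by_cases hq : q.1 + L < q.2
    · simp [hq, mul_comm]
    · simp [hq]
  have hinner : ∀ i : ℕ, (∑' j : ℕ, G₁ (i, j))
      ≤ ENNReal.ofReal ((i : ℝ) ^ a) * (ENNReal.ofReal R * ENNReal.ofReal ((L : ℝ) ^ (a + 1))) := by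
    intro i
    have h5 : (∑' j : ℕ, G₁ (i, j))
        = ENNReal.ofReal ((i : ℝ) ^ a) *
          ∑' j : ℕ, (if i + L < j then ENNReal.ofReal ((j : ℝ) ^ a) else 0) := by
      rw [← ENNReal.tsum_mul_left]
      apply tsum_congr
      intro j
      rw [hG₁]
      simp only [mul_ite, mul_zero]
    rw [h5]
    apply mul_le_mul_right
    calc (∑' j : ℕ, if i + L < j then ENNReal.ofReal ((j : ℝ) ^ a) else 0)
        ≤ (∑' k : ℕ, ENNReal.ofReal ((k : ℝ) ^ a)) *
            ENNReal.ofReal (((i + L : ℕ) : ℝ) ^ (a + 1)) :=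
          offdiag_tail_bound a ha0 (i + L) (by omega)
      _ ≤ ENNReal.ofReal R * ENNReal.ofReal ((L : ℝ) ^ (a + 1)) := by
          rw [hE]
          apply mul_le_mul_right
          apply ENNReal.ofReal_le_ofReal
          apply Real.rpow_le_rpow_of_nonpos hLpos (by exact_mod_cast Nat.le_add_left L i) hs0
  have step4 : (∑' q, G₁ q) ≤ ENNReal.ofReal R * (ENNReal.ofReal R * ENNReal.ofReal ((L : ℝ) ^ (a + 1))) := by
    rw [ENNReal.tsum_prod']
    calc (∑' i : ℕ, ∑' j : ℕ, G₁ (i, j))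
        ≤ ∑' i : ℕ, ENNReal.ofReal ((i : ℝ) ^ a) *
            (ENNReal.ofReal R * ENNReal.ofReal ((L : ℝ) ^ (a + 1))) :=
          ENNReal.tsum_le_tsum hinner
      _ = _ := by rw [ENNReal.tsum_mul_right, hE]
  have key : (∑' q, ENNReal.ofReal (F q))
      ≤ ENNReal.ofReal ((2 * R ^ 2 + 1) * (L : ℝ) ^ (2 * d - 1)) := by
    calc (∑' q, ENNReal.ofReal (F q))
        ≤ ∑' q, (G₁ q + G₂ q) := step1
      _ = (∑' q, G₁ q) + (∑' q, G₂ q) := ENNReal.tsum_add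
      _ = (∑' q, G₁ q) + (∑' q, G₁ q) := by rw [step3]
      _ ≤ ENNReal.ofReal R * (ENNReal.ofReal R * ENNReal.ofReal ((L : ℝ) ^ (a + 1)))
          + ENNReal.ofReal R * (ENNReal.ofReal R * ENNReal.ofReal ((L : ℝ) ^ (a + 1))) :=
          add_le_add step4 step4
      _ = ENNReal.ofReal (R * (R * (L : ℝ) ^ (a + 1)) + R * (R * (L : ℝ) ^ (a + 1))) := by
          rw [← ENNReal.ofReal_mul hR, ← ENNReal.ofReal_mul hR,
            ← ENNReal.ofReal_add (by positivity) (by positivity)]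
      _ ≤ ENNReal.ofReal ((2 * R ^ 2 + 1) * (L : ℝ) ^ (2 * d - 1)) := by
          apply ENNReal.ofReal_le_ofReal
          rw [hs_eq]
          have hLs : 0 ≤ (L : ℝ) ^ (a + 1) := Real.rpow_nonneg (le_of_lt hLpos) _
          nlinarith
  have heq : ENNReal.ofReal (∑' q, F q) = ∑' q, ENNReal.ofReal (F q) :=
    ENNReal.ofReal_tsum_of_nonneg hFnonneg hS
  have hfin : ENNReal.ofReal (∑' q, F q) ≤ ENNReal.ofReal ((2 * R ^ 2 + 1) * (L : ℝ) ^ (2 * d - 1)) := by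
    rw [heq]; exact key
  exact (ENNReal.ofReal_le_ofReal_iff (by positivity)).1 hfin
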